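/- Let G be a group with involutions a, b, c, d, e, f satisfying the braid relations aba = bab, bcb = cbc, cec = ece, efe = fef, fdf = dfd, dad = ada, the commutations [a,c]=[a,e]=[a,f]=[b,d]=[b,e]=[b,f]=[c,f]=[c,d]=[d,e]=1, and c·a·b·a·c = d·f·e·f·d. Then all six products b·a·d·f·e, a·d·f·e·c, d·f·e·c·b, f·e·c·b·a, e·c·b·a·d, and c·b·a·d·f are equal in G. -/

import Mathlib

open scoped commutatorElement

theorem stmt3 {G : Type*} [Group G] (a b c d e f : G)
    (ha : a ^ 2 = 1) (hb : b ^ 2 = 1) (hc : c ^ 2 = 1)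
    (hd : d ^ 2 = 1) (he : e ^ 2 = 1) (hf : f ^ 2 = 1)
    (br1 : a * b * a = b * a * b) (br2 : b * c * b = c * b * c)
    (br3 : c * e * c = e * c * e) (br4 : e * f * e = f * e * f)
    (br5 : f * d * f = d * f * d) (br6 : d * a * d = a * d * a)
    (c1 : ⁅a, c⁆ = 1) (c2 : ⁅a, e⁆ = 1) (c3 : ⁅a, f⁆ = 1)
    (c4 : ⁅b, d⁆ = 1) (c5 : ⁅b, e⁆ = 1) (c6 : ⁅b, f⁆ = 1)
    (c7 : ⁅c, f⁆ = 1) (c8 : ⁅c, d⁆ = 1) (c9 : ⁅d, e⁆ = 1)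
    (hrel : c * a * b * a * c = d * f * e * f * d) :
    b * a * d * f * e = a * d * f * e * c ∧
    a * d * f * e * c = d * f * e * c * b ∧
    d * f * e * c * b = f * e * c * b * a ∧
    f * e * c * b * a = e * c * b * a * d ∧
    e * c * b * a * d = c * b * a * d * f := by
  -- basic building blocks
  have S : ∀ x : G, x ^ 2 = 1 → ∀ z : G, x * (x * z) = z := by
    intro x h z
    rw [← mul_assoc, ← pow_two, h, one_mul]
  have W : ∀ x y : G, x * y = y * x → ∀ z : G, x * (y * z) = y * (x * z) := by
    intro x y h z
    rw [← mul_assoc, h, mul_assoc]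
  have B : ∀ x y : G, x * y * x = y * x * y → ∀ z : G,
      x * (y * (x * z)) = y * (x * (y * z)) := by
    intro x y h z
    simp only [← mul_assoc]
    rw [h]
  have Sa := S a ha
  have Sb := S b hb
  have Sc := S c hc
  have Sd := S d hd
  have Se := S e he
  have Sf := S f hf
  have hac : a * c = c * a := commutatorElement_eq_one_iff_mul_comm.mp c1
  have hae : a * e = e * a := commutatorElement_eq_one_iff_mul_comm.mp c2
  have haf : a * f = f * a := commutatorElement_eq_one_iff_mul_comm.mp c3
  have hbd : b * d = d * b := commutatorElement_eq_one_iff_mul_comm.mp c4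
  have hbe : b * e = e * b := commutatorElement_eq_one_iff_mul_comm.mp c5
  have hbf : b * f = f * b := commutatorElement_eq_one_iff_mul_comm.mp c6
  have hcf : c * f = f * c := commutatorElement_eq_one_iff_mul_comm.mp c7
  have hcd : c * d = d * c := commutatorElement_eq_one_iff_mul_comm.mp c8
  have hde : d * e = e * d := commutatorElement_eq_one_iff_mul_comm.mp c9
  have Wac := W a c hac
  have Wca := W c a hac.symm
  have Wae := W a e hae
  have Wea := W e a hae.symm
  have Waf := W a f haf
  have Wfa := W f a haf.symm
  have Wbd := W b d hbd
  have Wdb := W d b hbd.symm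
  have Wbe := W b e hbe
  have Web := W e b hbe.symm
  have Wbf := W b f hbf
  have Wfb := W f b hbf.symm
  have Wcd := W c d hcd
  have Wdc := W d c hcd.symm
  have Wde := W d e hde
  have Wed := W e d hde.symm
  have Bab := B a b br1
  have Bbc := B b c br2
  have Bce := B c e br3
  have Bef := B e f br4
  have Bfd := B f d br5
  have Bda := B d a br6
  -- hrel in right-associated, parametrized form
  have hrel' : ∀ z : G, d * (f * (e * (f * (d * z)))) = c * (a * (b * (a * (c * z)))) := by
    intro z
    simp only [← mul_assoc]
    rw [hrel]
  -- e f d f e = c a b a c (parametrized)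
  have hE : ∀ z : G, e * (f * (d * (f * (e * z)))) = c * (a * (b * (a * (c * z)))) := by
    intro z
    calc e * (f * (d * (f * (e * z))))
        = e * (d * (f * (d * (e * z)))) := by rw [Bfd (e * z)]
      _ = d * (e * (f * (d * (e * z)))) := by rw [Wed (f * (d * (e * z)))]
      _ = d * (e * (f * (e * (d * z)))) := by rw [Wde z]
      _ = d * (f * (e * (f * (d * z)))) := by rw [Bef (d * z)]
      _ = c * (a * (b * (a * (c * z)))) := hrel' z
  -- key identity:  b a d f e  =  d f e c b  (parametrized)
  have hK0 : ∀ z : G,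
      e * (f * (d * (b * (a * (d * (f * (e * z))))))) = c * (b * z) := by
    intro z
    calc e * (f * (d * (b * (a * (d * (f * (e * z)))))))
        = e * (f * (b * (d * (a * (d * (f * (e * z))))))) := by
          rw [Wdb (a * (d * (f * (e * z))))]
      _ = e * (b * (f * (d * (a * (d * (f * (e * z))))))) := by
          rw [Wfb (d * (a * (d * (f * (e * z)))))]
      _ = b * (e * (f * (d * (a * (d * (f * (e * z))))))) := by
          rw [Web (f * (d * (a * (d * (f * (e * z))))))]
      _ = b * (e * (f * (a * (d * (a * (f * (e * z))))))) := by rw [Bda (f * (e * z))]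
      _ = b * (e * (a * (f * (d * (a * (f * (e * z))))))) := by
          rw [Wfa (d * (a * (f * (e * z))))]
      _ = b * (a * (e * (f * (d * (a * (f * (e * z))))))) := by
          rw [Wea (f * (d * (a * (f * (e * z)))))]
      _ = b * (a * (e * (f * (d * (f * (a * (e * z))))))) := by rw [Waf (e * z)]
      _ = b * (a * (e * (f * (d * (f * (e * (a * z))))))) := by rw [Wae z]
      _ = b * (a * (c * (a * (b * (a * (c * (a * z))))))) := by rw [hE (a * z)]
      _ = b * (a * (c * (a * (b * (a * (a * (c * z))))))) := by rw [Wca z]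
      _ = b * (a * (c * (a * (b * (c * z))))) := by rw [Sa (c * z)]
      _ = b * (a * (a * (c * (b * (c * z))))) := by rw [Wca (b * (c * z))]
      _ = b * (c * (b * (c * z))) := by rw [Sa (c * (b * (c * z)))]
      _ = c * (b * (c * (c * z))) := by rw [Bbc (c * z)]
      _ = c * (b * z) := by rw [Sc z]
  have hK1 : ∀ z : G,
      e * (f * (d * (d * (f * (e * (c * (b * z))))))) = c * (b * z) := by
    intro z
    rw [Sd (f * (e * (c * (b * z)))), Sf (e * (c * (b * z))), Se (c * (b * z))]
  have K : ∀ z : G, b * (a * (d * (f * (e * z)))) = d * (f * (e * (c * (b * z)))) := by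
    intro z
    exact mul_left_cancel (mul_left_cancel (mul_left_cancel ((hK0 z).trans (hK1 z).symm)))
  -- w1 = w2
  have hg0 : ∀ z : G, a * (b * (a * (d * (f * (e * z))))) = d * (f * (e * (c * z))) := by
    intro z
    calc a * (b * (a * (d * (f * (e * z)))))
        = b * (a * (b * (d * (f * (e * z))))) := by rw [Bab (d * (f * (e * z)))]
      _ = b * (a * (d * (b * (f * (e * z))))) := by rw [Wbd (f * (e * z))]
      _ = b * (a * (d * (f * (b * (e * z))))) := by rw [Wbf (e * z)]
      _ = b * (a * (d * (f * (e * (b * z))))) := by rw [Wbe z]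
      _ = d * (f * (e * (c * (b * (b * z))))) := by rw [K (b * z)]
      _ = d * (f * (e * (c * z))) := by rw [Sb z]
  have g1 : ∀ z : G, b * (a * (d * (f * (e * z)))) = a * (d * (f * (e * (c * z)))) := by
    intro z
    exact mul_left_cancel ((hg0 z).trans (Sa (d * (f * (e * (c * z))))).symm)
  have g2 : ∀ z : G, a * (d * (f * (e * (c * z)))) = d * (f * (e * (c * (b * z)))) :=
    fun z => (g1 z).symm.trans (K z)
  -- w2 = w4
  have ha1 : ∀ z : G,
      d * (a * (d * (f * (e * (c * z))))) = a * (d * (f * (e * (c * (a * z))))) := by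
    intro z
    calc d * (a * (d * (f * (e * (c * z)))))
        = a * (d * (a * (f * (e * (c * z))))) := by rw [Bda (f * (e * (c * z)))]
      _ = a * (d * (f * (a * (e * (c * z))))) := by rw [Waf (e * (c * z))]
      _ = a * (d * (f * (e * (a * (c * z))))) := by rw [Wae (c * z)]
      _ = a * (d * (f * (e * (c * (a * z))))) := by rw [Wac z]
  have hstep : ∀ z : G,
      a * (d * (f * (e * (c * (a * z))))) = f * (e * (c * (b * z))) := by
    intro z
    exact (ha1 z).symm.trans ((congrArg (d * ·) (g2 z)).trans
      (Sd (f * (e * (c * (b * z))))))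
  have h24 : ∀ z : G,
      a * (d * (f * (e * (c * z)))) = f * (e * (c * (b * (a * z)))) := by
    intro z
    have h := hstep (a * z)
    rwa [Sa z] at h
  have g3 : ∀ z : G,
      d * (f * (e * (c * (b * z)))) = f * (e * (c * (b * (a * z)))) :=
    fun z => (g2 z).symm.trans (h24 z)
  -- w3 = w5
  have hb1 : ∀ z : G,
      f * (d * (f * (e * (c * (b * z))))) = d * (f * (e * (c * (b * (d * z))))) := by
    intro z
    calc f * (d * (f * (e * (c * (b * z)))))
        = d * (f * (d * (e * (c * (b * z))))) := by rw [Bfd (e * (c * (b * z)))]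
      _ = d * (f * (e * (d * (c * (b * z))))) := by rw [Wde (c * (b * z))]
      _ = d * (f * (e * (c * (d * (b * z))))) := by rw [Wdc (b * z)]
      _ = d * (f * (e * (c * (b * (d * z))))) := by rw [Wdb z]
  have hstep2 : ∀ z : G,
      d * (f * (e * (c * (b * (d * z))))) = e * (c * (b * (a * z))) := by
    intro z
    exact (hb1 z).symm.trans ((congrArg (f * ·) (g3 z)).trans
      (Sf (e * (c * (b * (a * z))))))
  have h35 : ∀ z : G,
      d * (f * (e * (c * (b * z)))) = e * (c * (b * (a * (d * z)))) := by
    intro z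
    have h := hstep2 (d * z)
    rwa [Sd z] at h
  have g4 : ∀ z : G,
      f * (e * (c * (b * (a * z)))) = e * (c * (b * (a * (d * z)))) :=
    fun z => (g3 z).symm.trans (h35 z)
  -- w5 = w1
  have h51 : ∀ z : G,
      e * (c * (b * (a * (d * z)))) = b * (a * (d * (f * (e * z)))) :=
    fun z => (h35 z).symm.trans (K z).symm
  -- w5 = w6
  have hc1 : ∀ z : G,
      e * (b * (a * (d * (f * (e * z))))) = b * (a * (d * (f * (e * (f * z))))) := by
    intro z
    calc e * (b * (a * (d * (f * (e * z)))))
        = b * (e * (a * (d * (f * (e * z))))) := by rw [Web (a * (d * (f * (e * z))))]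
      _ = b * (a * (e * (d * (f * (e * z))))) := by rw [Wea (d * (f * (e * z)))]
      _ = b * (a * (d * (e * (f * (e * z))))) := by rw [Wed (f * (e * z))]
      _ = b * (a * (d * (f * (e * (f * z))))) := by rw [Bef z]
  have hstep3 : ∀ z : G,
      b * (a * (d * (f * (e * (f * z))))) = c * (b * (a * (d * z))) := by
    intro z
    exact (hc1 z).symm.trans ((congrArg (e * ·) (h51 z).symm).trans
      (Se (c * (b * (a * (d * z))))))
  have g5aux : ∀ z : G,
      b * (a * (d * (f * (e * z)))) = c * (b * (a * (d * (f * z)))) := by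
    intro z
    have h := hstep3 (f * z)
    rwa [Sf z] at h
  have g5 : ∀ z : G,
      e * (c * (b * (a * (d * z)))) = c * (b * (a * (d * (f * z)))) :=
    fun z => (h51 z).trans (g5aux z)
  refine ⟨?_, ?_, ?_, ?_, ?_⟩
  · simpa only [mul_assoc, mul_one] using g1 1
  · simpa only [mul_assoc, mul_one] using g2 1
  · simpa only [mul_assoc, mul_one] using g3 1
  · simpa only [mul_assoc, mul_one] using g4 1
  · simpa only [mul_assoc, mul_one] using g5 1
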